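/- arXiv:1702.07765 — 3 statements merged into one kernel-verified Lean document; each statement's English description precedes it below -/
import Mathlib

section
/- Let M be a finitely generated ℤ-graded R-module with minimal free resolution F, and let a ∈ F_i be a nonzero homogeneous element. Then ||a|| = |a|_F + |a|_m. -/
set_option maxHeartbeats 1000000
set_option synthInstance.maxHeartbeats 400000

open MvPolynomial

noncomputable section

namespace LinMaps


/-- The polynomial ring `S = 𝕜[x₁,…,xₙ]`. -/
abbrev PolyS (k : Type) [Field k] (n : ℕ) := MvPolynomial (Fin n) k

/-- The irrelevant maximal ideal `m = (x₁,…,xₙ)` of `S`. -/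
def mIdl (k : Type) [Field k] (n : ℕ) : Ideal (PolyS k n) := Ideal.span (Set.range X)

/-- `polyHom t p` : the polynomial `p` is homogeneous of degree `t ∈ ℤ` in the standard
`ℤ`-grading of `S`. -/
def polyHom (k : Type) [Field k] (n : ℕ) : ℤ → PolyS k n → Prop := fun t p =>
  if 0 ≤ t then p.IsHomogeneous t.toNat else p = 0

/-- `J` is a homogeneous ideal. -/
def IdealIsHomog {k : Type} [Field k] {n : ℕ} (J : Ideal (PolyS k n)) : Prop :=
  ∀ p ∈ J, ∀ t : ℕ, MvPolynomial.homogeneousComponent t p ∈ J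

/-- Homogeneity of degree `t ∈ ℤ` in `R = S/J`. -/
def quotHom (k : Type) [Field k] (n : ℕ) (J : Ideal (PolyS k n)) :
    ℤ → (PolyS k n ⧸ J) → Prop :=
  fun t r => ∃ p : PolyS k n, polyHom k n t p ∧ Ideal.Quotient.mk J p = r

/-- The irrelevant maximal ideal of `R = S/J`. -/
def mIdlQ (k : Type) [Field k] (n : ℕ) (J : Ideal (PolyS k n)) : Ideal (PolyS k n ⧸ J) :=
  (mIdl k n).map (Ideal.Quotient.mk J)

/-- Homogeneity for the fine `ℤⁿ`-multigrading on `S`: `p` is homogeneous of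
multidegree `m : Fin n → ℤ`. -/
def mHom (k : Type) [Field k] (n : ℕ) : (Fin n → ℤ) → PolyS k n → Prop := fun m p =>
  ∀ d ∈ p.support, ∀ u, (d u : ℤ) = m u

/-- A structure of graded module (with degrees in the abelian group `γ`) on an `A`-module `M`,
relative to a notion `hom : γ → A → Prop` of homogeneous elements of the ring `A`:
a family of additive subgroups forming an internal direct sum, such that homogeneous ring
elements shift degrees. -/
structure GrModStr {A : Type} [CommRing A] {γ : Type} [AddCommGroup γ] [DecidableEq γ]
    (hom : γ → A → Prop) (M : Type) [AddCommGroup M] [Module A M] where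
  gr : γ → AddSubgroup M
  internal : DirectSum.IsInternal gr
  smul_mem : ∀ {t e : γ} {r : A} {m : M}, hom t r → m ∈ gr e → r • m ∈ gr (t + e)

/-- A minimal graded free resolution `F : 0 ← M ← F₀ ← F₁ ← ⋯` of the graded `A`-module `M`.
`β i` is a (finite) homogeneous basis of `Fᵢ = β i →₀ A`, with degrees `degB`.
The differential `d` and augmentation `aug` are homogeneous, the complex is exact,
and minimality `d(Fᵢ) ⊆ m·Fᵢ₋₁` holds (all matrix entries lie in `mA`). -/
structure MinFreeRes {A : Type} [CommRing A] (mA : Ideal A) {γ : Type} [AddCommGroup γ]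
    [DecidableEq γ] (hom : γ → A → Prop) (M : Type) [AddCommGroup M] [Module A M]
    (gM : GrModStr hom M) where
  β : ℕ → Type
  finb : ∀ i, Fintype (β i)
  degB : ∀ i, β i → γ
  d : ∀ i, (β (i+1) →₀ A) →ₗ[A] (β i →₀ A)
  aug : (β 0 →₀ A) →ₗ[A] M
  aug_surj : Function.Surjective aug
  exact0 : LinearMap.ker aug = LinearMap.range (d 0)
  exact : ∀ i, LinearMap.ker (d i) = LinearMap.range (d (i+1))
  homog : ∀ i (b : β (i+1)) (c : β i), hom (degB (i+1) b - degB i c) (d i (Finsupp.single b 1) c)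
  minimal : ∀ i (b : β (i+1)) (c : β i), d i (Finsupp.single b 1) c ∈ mA
  aug_hom : ∀ (t : γ) (g : β 0 →₀ A), (∀ c, hom (t - degB 0 c) (g c)) → aug g ∈ gM.gr t

namespace MinFreeRes

variable {A : Type} [CommRing A] {mA : Ideal A} {γ : Type} [AddCommGroup γ] [DecidableEq γ]
  {hom : γ → A → Prop} {M : Type} [AddCommGroup M] [Module A M] {gM : GrModStr hom M}
  (res : MinFreeRes mA hom M gM)

/-- The matrix entry of the differential between basis elements `b` and `c`. -/
def ent (i : ℕ) (b : res.β (i+1)) (c : res.β i) : A := res.d i (Finsupp.single b 1) c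

/-- `g ∈ Fᵢ` is homogeneous of (internal) degree `t`. -/
def IsHomogF (i : ℕ) (t : γ) (g : res.β i →₀ A) : Prop := ∀ c, hom (t - res.degB i c) (g c)

open Classical in
/-- The entries of the linear part of the differential: all entries lying in `m²` are deleted. -/
def linent (i : ℕ) (b : res.β (i+1)) (c : res.β i) : A :=
  if res.ent i b c ∈ mA ^ 2 then 0 else res.ent i b c

/-- The row of the linear part of the differential corresponding to a basis element `b`. -/
def linrow (i : ℕ) (b : res.β (i+1)) : res.β i →₀ A :=
  letI := res.finb i
  Finsupp.equivFunOnFinite.symm fun c => res.linent i b c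

/-- The differential of the linear part `F^lin` of the resolution. -/
def dlin (i : ℕ) : (res.β (i+1) →₀ A) →ₗ[A] (res.β i →₀ A) :=
  Finsupp.linearCombination A (fun b => res.linrow i b)

/-- The submodule `mᵉ · Fᵢ`. -/
def mF (ℓ i : ℕ) : Submodule A (res.β i →₀ A) := (mA ^ ℓ) • (⊤ : Submodule A (res.β i →₀ A))

/-- Nonvanishing of the `i`-th homology of the linear part `F^lin`. -/
def HlinNZ : ℕ → Prop
  | 0 => LinearMap.range (res.dlin 0) ≠ ⊤
  | i+1 => ¬ LinearMap.ker (res.dlin i) ≤ LinearMap.range (res.dlin (i+1))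

/-- The complex `F ⊗ A/mᵉ`, concretely `Fᵢ/mᵉFᵢ`. -/
abbrev Cq (ℓ i : ℕ) := (res.β i →₀ A) ⧸ res.mF ℓ i

/-- The differential of `F ⊗ A/mᵉ`. -/
def dq (ℓ i : ℕ) : res.Cq ℓ (i+1) →ₗ[A] res.Cq ℓ i :=
  Submodule.mapQ _ _ (res.d i) (by
    rw [← Submodule.map_le_iff_le_comap]
    calc Submodule.map (res.d i) (res.mF ℓ (i+1))
        = (mA ^ ℓ) • Submodule.map (res.d i) ⊤ := Submodule.map_smul'' _ _ _
      _ ≤ res.mF ℓ i := smul_mono_right _ le_top)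

/-- The comparison map `F ⊗ A/m² → F ⊗ A/m` induced by the projection `A/m² → A/m`. -/
def qq (i : ℕ) : res.Cq 2 i →ₗ[A] res.Cq 1 i :=
  Submodule.mapQ _ _ LinearMap.id (by
    rw [← Submodule.map_le_iff_le_comap, Submodule.map_id]
    exact Submodule.smul_mono_left (Ideal.pow_le_pow_right one_le_two))

lemma qq_dq (i : ℕ) : (res.qq i).comp (res.dq 2 i) = (res.dq 1 i).comp (res.qq (i+1)) := by
  apply Submodule.linearMap_qext
  apply LinearMap.ext
  intro x
  simp [dq, qq, Submodule.mapQ_apply]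

/-- Tor₀ of `M` with `A/mᵉ`, computed from the resolution. -/
abbrev Tor0 (ℓ : ℕ) := (res.Cq ℓ 0) ⧸ LinearMap.range (res.dq ℓ 0)

/-- Cycles of `F ⊗ A/mᵉ` in homological degree `l+1`. -/
abbrev Zc (ℓ l : ℕ) : Submodule A (res.Cq ℓ (l+1)) := LinearMap.ker (res.dq ℓ l)

/-- Boundaries, as a submodule of the cycles. -/
abbrev Bc (ℓ l : ℕ) : Submodule A ↥(res.Zc ℓ l) :=
  Submodule.comap (res.Zc ℓ l).subtype (LinearMap.range (res.dq ℓ (l+1)))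

/-- `Tor_{l+1}(M, A/mᵉ)` computed from the resolution. -/
abbrev TorS (ℓ l : ℕ) := ↥(res.Zc ℓ l) ⧸ res.Bc ℓ l

/-- `qq` restricted to cycles. -/
def qqZ (l : ℕ) : ↥(res.Zc 2 l) →ₗ[A] ↥(res.Zc 1 l) :=
  (res.qq (l+1)).restrict (p := res.Zc 2 l) (q := res.Zc 1 l) (by
    intro x hx
    have h := LinearMap.ext_iff.mp (res.qq_dq l) x
    simp only [LinearMap.comp_apply] at h
    simp only [Zc, LinearMap.mem_ker] at hx ⊢
    rw [← h, hx, map_zero])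

/-- The map `ν^1_{l+1}(M) : Tor_{l+1}(M, A/m²) → Tor_{l+1}(M, A/m)`. -/
def nuS (l : ℕ) : res.TorS 2 l →ₗ[A] res.TorS 1 l :=
  Submodule.mapQ _ _ (res.qqZ l) (by
    rintro ⟨x, hx⟩ hb
    simp only [Bc, Submodule.mem_comap, Submodule.subtype_apply, LinearMap.mem_range] at hb ⊢
    obtain ⟨y, hy⟩ := hb
    refine ⟨res.qq (l+2) y, ?_⟩
    have h := LinearMap.ext_iff.mp (res.qq_dq (l+1)) y
    simp only [LinearMap.comp_apply] at h
    show res.dq 1 (l+1) (res.qq (l+2) y) = (res.qqZ l ⟨x, hx⟩ : res.Cq 1 (l+1))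
    rw [← h, hy]
    rfl)

/-- The map `ν^1_0(M) : Tor₀(M, A/m²) → Tor₀(M, A/m)`. -/
def nu0 : res.Tor0 2 →ₗ[A] res.Tor0 1 :=
  Submodule.mapQ _ _ (res.qq 0) (by
    rintro x hx
    simp only [LinearMap.mem_range, Submodule.mem_comap] at hx ⊢
    obtain ⟨y, hy⟩ := hx
    refine ⟨res.qq 1 y, ?_⟩
    have h := LinearMap.ext_iff.mp (res.qq_dq 0) y
    simp only [LinearMap.comp_apply] at h
    rw [← h, hy])

/-- Nonvanishing of `ν_i^1(M)`. -/
def nuNZ : ℕ → Prop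
  | 0 => res.nu0 ≠ 0
  | l+1 => res.nuS l ≠ 0

end MinFreeRes

section ZGraded

variable {A : Type} [CommRing A] {mA : Ideal A}
  {hom : ℤ → A → Prop} {M : Type} [AddCommGroup M] [Module A M] {gM : GrModStr hom M}
  (res : MinFreeRes mA hom M gM)

namespace MinFreeRes

/-- The strand filtration `F^{≤k}`: the subcomplex of `F` generated by all homogeneous
elements `a` with `‖a‖ = deg a - i ≤ k`. -/
def Fle (kk : ℤ) (i : ℕ) : Submodule A (res.β i →₀ A) :=
  Submodule.span A {g | ∃ t : ℤ, res.IsHomogF i t g ∧ t - i ≤ kk}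

/-- `|a|_F = min {k : a ∈ F^{≤k}}`. -/
def degF {i : ℕ} (a : res.β i →₀ A) : ℤ := sInf {kk : ℤ | a ∈ res.Fle kk i}

/-- `|a|_m = max {ℓ : a ∈ mᵉF}`. -/
def degm {i : ℕ} (a : res.β i →₀ A) : ℕ := sSup {ℓ : ℕ | a ∈ res.mF ℓ i}

/-- The `k`-linear strand of `F^lin`: the subcomplex spanned by the basis elements `b`
with `‖b‖ = deg b - i = k`. -/
def strand (kk : ℤ) (i : ℕ) : Submodule A (res.β i →₀ A) :=
  Submodule.span A {g | ∃ b : res.β i, res.degB i b - i = kk ∧ g = Finsupp.single b 1}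

/-- Vanishing of the homology of the subcomplex `F^{≤k}` in homological degree `j`. -/
def HleZero (kk : ℤ) : ℕ → Prop
  | 0 => res.Fle kk 0 ≤ Submodule.map (res.d 0) (res.Fle kk 1)
  | j+1 => LinearMap.ker (res.d j) ⊓ res.Fle kk (j+1) ≤
      Submodule.map (res.d (j+1)) (res.Fle kk (j+2))

end MinFreeRes

/-- The submodule `M_{⟨k⟩}` of `M` generated by the homogeneous elements of degree `k`. -/
def degPartMod (gM : GrModStr hom M) (k₀ : ℤ) : Submodule A M :=
  Submodule.span A (gM.gr k₀ : Set M)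

/-- A graded module `(N, gN)` has a `k₀`-linear (minimal free) resolution. -/
def HasLinRes (N : Type) [AddCommGroup N] [Module A N] (gN : GrModStr hom N) (k₀ : ℤ) : Prop :=
  ∃ res : MinFreeRes mA hom N gN, ∀ i (b : res.β i), res.degB i b = k₀ + i

/-- `M` is componentwise linear: for every `k₀`, the submodule `M_{⟨k₀⟩}` (with its induced
grading) has a `k₀`-linear resolution. -/
def CompLinear (mA : Ideal A) (gM : GrModStr hom M) : Prop :=
  ∀ k₀ : ℤ, ∃ gN : GrModStr hom ↥(degPartMod gM k₀),
    (∀ (t : ℤ) (x : ↥(degPartMod gM k₀)), x ∈ gN.gr t ↔ (x : M) ∈ gM.gr t) ∧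
    HasLinRes (mA := mA) ↥(degPartMod gM k₀) gN k₀

end ZGraded

section Aux

variable {k : Type} [Field k] {n : ℕ}

lemma degree_add' (a b : Fin n →₀ ℕ) : (a + b).degree = a.degree + b.degree := by
  rw [Finsupp.degree_eq_weight_one, map_add]

lemma degree_single' (i : Fin n) : (Finsupp.single i (1 : ℕ)).degree = 1 := by
  rw [Finsupp.degree_apply, Finsupp.support_single_ne_zero i one_ne_zero]
  simp

lemma monomial_mem_pow (ℓ : ℕ) : ∀ (d : Fin n →₀ ℕ), ℓ ≤ d.degree → ∀ c : k,
    (monomial d c : PolyS k n) ∈ (mIdl k n) ^ ℓ := by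
  induction ℓ with
  | zero => intro d _ c; simp [Ideal.one_eq_top]
  | succ ℓ ih =>
    intro d hd c
    have hdeg : d.degree ≠ 0 := by omega
    have hex : ∃ i, d i ≠ 0 := by
      by_contra hc; push_neg at hc
      exact hdeg ((Finsupp.degree_eq_zero_iff d).mpr (Finsupp.ext hc))
    obtain ⟨i, hi⟩ := hex
    have hle : Finsupp.single i 1 ≤ d := Finsupp.single_le_iff.mpr (Nat.one_le_iff_ne_zero.mpr hi)
    have hsum : Finsupp.single i 1 + (d - Finsupp.single i 1) = d := add_tsub_cancel_of_le hle
    have hdeg' : ℓ ≤ (d - Finsupp.single i 1).degree := by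
      have h1 := degree_add' (Finsupp.single i 1) (d - Finsupp.single i 1)
      rw [hsum, degree_single'] at h1
      omega
    have hmon : (monomial d c : PolyS k n) = X i * monomial (d - Finsupp.single i 1) c := by
      rw [X, monomial_mul, one_mul, hsum]
    rw [hmon, pow_succ']
    exact Ideal.mul_mem_mul (Ideal.subset_span ⟨i, rfl⟩) (ih _ hdeg' c)

lemma homog_mem_pow {p : PolyS k n} {s ℓ : ℕ} (hp : p.IsHomogeneous s) (h : ℓ ≤ s) :
    p ∈ (mIdl k n) ^ ℓ := by
  rw [← p.support_sum_monomial_coeff]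
  refine Ideal.sum_mem _ fun d hd => monomial_mem_pow ℓ d ?_ _
  have hdeg : d.degree = s := by
    rw [Finsupp.degree_eq_weight_one]
    exact hp (MvPolynomial.mem_support_iff.mp hd)
  omega

/-- The ideal of polynomials all of whose monomials have degree at least `ℓ`. -/
def lowBound (k : Type) [Field k] (n : ℕ) (ℓ : ℕ) : Ideal (PolyS k n) where
  carrier := {p | ∀ d ∈ p.support, ℓ ≤ d.degree}
  add_mem' := by
    intro p q hp hq d hd
    rcases Finset.mem_union.mp (MvPolynomial.support_add hd) with h | h
    exacts [hp d h, hq d h]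
  zero_mem' := by intro d hd; simp at hd
  smul_mem' := by
    intro c p hp d hd
    rw [smul_eq_mul] at hd
    obtain ⟨d1, hd1, d2, hd2, rfl⟩ := Finset.mem_add.mp (MvPolynomial.support_mul c p hd)
    have h2 := hp d2 hd2
    have h3 := degree_add' d1 d2
    omega

lemma pow_le_lowBound (ℓ : ℕ) : (mIdl k n) ^ ℓ ≤ lowBound k n ℓ := by
  induction ℓ with
  | zero => intro p _ d _; exact Nat.zero_le _
  | succ ℓ ih =>
    rw [pow_succ]
    refine Ideal.mul_le.mpr fun r hr s hs d hd => ?_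
    obtain ⟨d1, hd1, d2, hd2, rfl⟩ := Finset.mem_add.mp (MvPolynomial.support_mul r s hd)
    have h1 := ih hr d1 hd1
    have h2 : 1 ≤ d2.degree := by
      have hsm : s ∈ lowBound k n 1 := by
        revert hs
        refine fun hs => ?_
        have hspan : mIdl k n ≤ lowBound k n 1 := by
          rw [mIdl, Ideal.span_le]
          rintro _ ⟨j, rfl⟩ e he
          rw [MvPolynomial.support_X] at he
          rw [Finset.mem_singleton.mp he, degree_single']
        exact hspan hs
      exact hsm d2 hd2
    have h3 := degree_add' d1 d2
    omega

lemma quotHom_zero_of_neg {J : Ideal (PolyS k n)} {t : ℤ} {r : PolyS k n ⧸ J}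
    (hr : quotHom k n J t r) (ht : t < 0) : r = 0 := by
  obtain ⟨p, hp, rfl⟩ := hr
  rw [polyHom, if_neg (not_le.mpr ht)] at hp
  rw [hp, map_zero]

lemma quotHom_mem_pow {J : Ideal (PolyS k n)} {t : ℤ} {r : PolyS k n ⧸ J}
    (hr : quotHom k n J t r) {ℓ : ℕ} (h : (ℓ : ℤ) ≤ t) : r ∈ (mIdlQ k n J) ^ ℓ := by
  obtain ⟨p, hp, rfl⟩ := hr
  have ht : 0 ≤ t := le_trans (Int.ofNat_nonneg ℓ) h
  rw [polyHom, if_pos ht] at hp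
  have hmem : p ∈ (mIdl k n) ^ ℓ := homog_mem_pow hp (by omega)
  rw [mIdlQ, ← Ideal.map_pow]
  exact Ideal.mem_map_of_mem _ hmem

lemma quotHom_eq_zero_of_mem_pow {J : Ideal (PolyS k n)} (hJ : IdealIsHomog J)
    {t : ℤ} {r : PolyS k n ⧸ J} (hr : quotHom k n J t r) {ℓ : ℕ} (h : t < (ℓ : ℤ))
    (hm : r ∈ (mIdlQ k n J) ^ ℓ) : r = 0 := by
  obtain ⟨p, hp, rfl⟩ := hr
  by_cases ht : 0 ≤ t
  · rw [polyHom, if_pos ht] at hp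
    rw [mIdlQ, ← Ideal.map_pow] at hm
    obtain ⟨q, hq, hqr⟩ :=
      (Ideal.mem_map_iff_of_surjective _ Ideal.Quotient.mk_surjective).mp hm
    have hpq : p - q ∈ J := by
      rw [← Ideal.Quotient.eq]
      exact hqr.symm
    have hcomp : homogeneousComponent t.toNat (p - q) ∈ J := hJ _ hpq _
    have hq0 : homogeneousComponent t.toNat q = 0 := by
      refine homogeneousComponent_eq_zero' _ _ fun d hd => ?_
      have := pow_le_lowBound ℓ hq d hd
      omega
    have hpfull : homogeneousComponent t.toNat p = p := by
      rw [homogeneousComponent_of_mem ((mem_homogeneousSubmodule _ _).mpr hp), if_pos rfl]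
    rw [map_sub, hq0, hpfull, sub_zero] at hcomp
    exact Ideal.Quotient.eq_zero_iff_mem.mpr hcomp
  · exact quotHom_zero_of_neg ⟨p, hp, rfl⟩ (not_le.mp ht)

lemma finsupp_eq_sum_smul_single {A : Type} [CommRing A] {β : Type} (g : β →₀ A) :
    g = ∑ c ∈ g.support, (g c) • Finsupp.single c (1 : A) := by
  conv_lhs => rw [← Finsupp.sum_single g]
  rw [Finsupp.sum]
  refine Finset.sum_congr rfl fun c _ => ?_
  rw [Finsupp.smul_single, smul_eq_mul, mul_one]

lemma mem_ideal_smul_top_iff {A : Type} [CommRing A] {β : Type} (I : Ideal A) (g : β →₀ A) :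
    g ∈ I • (⊤ : Submodule A (β →₀ A)) ↔ ∀ c, g c ∈ I := by
  constructor
  · intro hg c
    have hle : I • (⊤ : Submodule A (β →₀ A)) ≤
        Submodule.comap (Finsupp.lapply c) (I : Submodule A A) := by
      refine Submodule.smul_le.mpr fun r hr x _ => ?_
      simp only [Submodule.mem_comap, Finsupp.lapply_apply, Finsupp.smul_apply, smul_eq_mul]
      exact Ideal.mul_mem_right _ _ hr
    exact hle hg
  · intro h
    rw [finsupp_eq_sum_smul_single g]
    exact Submodule.sum_mem _ fun c _ => Submodule.smul_mem_smul (h c) trivial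

end Aux

/-- For a nonzero homogeneous `a ∈ F_i` of degree `t` one has
`‖a‖ = |a|_F + |a|_m`, where `‖a‖ = t - i`. -/
theorem norm_eq_degF_add_degm {k : Type} [Field k] {n : ℕ}
    (J : Ideal (PolyS k n)) (hJ : IdealIsHomog J)
    {M : Type} [AddCommGroup M] [Module (PolyS k n ⧸ J) M]
    (gM : GrModStr (quotHom k n J) M)
    (res : MinFreeRes (mIdlQ k n J) (quotHom k n J) M gM)
    (i : ℕ) (t : ℤ) (a : res.β i →₀ (PolyS k n ⧸ J))
    (ha : a ≠ 0) (hta : res.IsHomogF i t a) :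
    t - (i : ℤ) = res.degF a + (res.degm a : ℤ) := by
  classical
  set A := PolyS k n ⧸ J with hA
  have hom_one : quotHom k n J 0 (1 : A) :=
    ⟨1, by rw [polyHom, if_pos le_rfl]; exact isHomogeneous_one _ _, map_one _⟩
  have hom_zero : ∀ s : ℤ, quotHom k n J s (0 : A) :=
    fun s => ⟨0, by rw [polyHom]; split <;> simp [isHomogeneous_zero], map_zero _⟩
  have hsingle : ∀ c : res.β i, res.IsHomogF i (res.degB i c) (Finsupp.single c (1 : A)) := by
    intro c c'
    by_cases h : c = c'
    · subst h; rw [Finsupp.single_eq_same, sub_self]; exact hom_one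
    · rw [Finsupp.single_eq_of_ne' h]; exact hom_zero _
  have hs : a.support.Nonempty := Finsupp.support_nonempty_iff.mpr ha
  set D : ℤ := a.support.sup' hs fun c => res.degB i c with hD
  obtain ⟨c₀, hc₀, hDc₀⟩ := Finset.exists_mem_eq_sup' hs fun c => res.degB i c
  have hDeq : D = res.degB i c₀ := hD.trans hDc₀
  have hpos : ∀ c ∈ a.support, 0 ≤ t - res.degB i c := by
    intro c hc
    by_contra hcon
    exact Finsupp.mem_support_iff.mp hc (quotHom_zero_of_neg (hta c) (not_le.mp hcon))
  have hFle : ∀ kk : ℤ, a ∈ res.Fle kk i ↔ D - i ≤ kk := by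
    intro kk
    constructor
    · intro hmem
      have hle : res.Fle kk i ≤ ⨅ (c : res.β i) (_ : kk + (i : ℤ) < res.degB i c),
          LinearMap.ker (Finsupp.lapply (R := A) c) := by
        rw [MinFreeRes.Fle, Submodule.span_le]
        rintro g ⟨t', hg, ht'⟩
        simp only [SetLike.mem_coe, Submodule.mem_iInf, LinearMap.mem_ker, Finsupp.lapply_apply]
        intro c hc
        exact quotHom_zero_of_neg (hg c) (by omega)
      have hz := hle hmem
      simp only [Submodule.mem_iInf, LinearMap.mem_ker, Finsupp.lapply_apply] at hz
      have hnot : ¬ (kk + (i : ℤ) < res.degB i c₀) := fun hlt =>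
        Finsupp.mem_support_iff.mp hc₀ (hz c₀ hlt)
      omega
    · intro hk
      rw [finsupp_eq_sum_smul_single a]
      refine Submodule.sum_mem _ fun c hc => Submodule.smul_mem _ _ (Submodule.subset_span ?_)
      refine ⟨res.degB i c, hsingle c, ?_⟩
      have hcD : res.degB i c ≤ D := Finset.le_sup' (fun c => res.degB i c) hc
      omega
  have hmF : ∀ ℓ : ℕ, a ∈ res.mF ℓ i ↔ (ℓ : ℤ) ≤ t - D := by
    intro ℓ
    rw [MinFreeRes.mF, mem_ideal_smul_top_iff]
    constructor
    · intro h
      by_contra hcon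
      push_neg at hcon
      refine Finsupp.mem_support_iff.mp hc₀ (quotHom_eq_zero_of_mem_pow hJ (hta c₀) ?_ (h c₀))
      omega
    · intro h c
      by_cases hc : c ∈ a.support
      · refine quotHom_mem_pow (hta c) ?_
        have hcD : res.degB i c ≤ D := Finset.le_sup' (fun c => res.degB i c) hc
        omega
      · rw [Finsupp.notMem_support_iff.mp hc]
        exact Submodule.zero_mem _
  have hDt : 0 ≤ t - D := by
    have := hpos c₀ hc₀
    omega
  have hdegF : res.degF a = D - i := by
    rw [MinFreeRes.degF]
    have hset : {kk : ℤ | a ∈ res.Fle kk i} = Set.Ici (D - i) := by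
      ext kk
      rw [Set.mem_setOf_eq, hFle kk, Set.mem_Ici]
    rw [hset, csInf_Ici]
  have hdegm : (res.degm a : ℤ) = t - D := by
    rw [MinFreeRes.degm]
    have hset : {ℓ : ℕ | a ∈ res.mF ℓ i} = Set.Iic (t - D).toNat := by
      ext ℓ
      rw [Set.mem_setOf_eq, hmF ℓ, Set.mem_Iic]
      exact (Int.le_toNat hDt).symm
    rw [hset, csSup_Iic, Int.toNat_of_nonneg hDt]
  rw [hdegF, hdegm]
  ring
end LinMaps
end
end

section
/- Let M be a finitely generated ℤ-graded R-module with minimal free resolution F. Then ν_i^1(M) = 0 if and only if every homogeneous g ∈ F_i with d g ∈ m² F_{i−1} satisfies g ∈ m F_i. -/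
set_option maxHeartbeats 1000000
set_option synthInstance.maxHeartbeats 400000

open MvPolynomial

noncomputable section

namespace LinMaps


section Aux

open MinFreeRes

variable {A : Type} [CommRing A] {mA : Ideal A} {γ : Type} [AddCommGroup γ] [DecidableEq γ]
  {hom : γ → A → Prop} {M : Type} [AddCommGroup M] [Module A M] {gM : GrModStr hom M}
  (res : MinFreeRes mA hom M gM)

lemma mem_mF_iff (ℓ i : ℕ) (g : res.β i →₀ A) :
    g ∈ res.mF ℓ i ↔ ∀ c, g c ∈ mA ^ ℓ := by
  constructor
  · intro h
    refine Submodule.smul_induction_on h (fun r hr x _ c => ?_) (fun x y hx hy c => ?_)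
    · rw [Finsupp.smul_apply, smul_eq_mul]
      exact Ideal.mul_mem_right _ _ hr
    · rw [Finsupp.add_apply]
      exact add_mem (hx c) (hy c)
  · intro h
    have hrep : g = ∑ c ∈ g.support, Finsupp.single c (g c) := by
      conv_lhs => rw [← Finsupp.sum_single g]
      rfl
    rw [hrep]
    refine Submodule.sum_mem _ fun c _ => ?_
    have hs : Finsupp.single c (g c) = g c • Finsupp.single c (1 : A) := by
      rw [Finsupp.smul_single', mul_one]
    rw [hs]
    exact Submodule.smul_mem_smul (h c) Submodule.mem_top

lemma d_eq_sum (i : ℕ) (g : res.β (i+1) →₀ A) :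
    res.d i g = g.sum fun b a => a • res.d i (Finsupp.single b 1) := by
  conv_lhs => rw [← Finsupp.sum_single g]
  rw [map_finsuppSum]
  refine Finsupp.sum_congr fun b _ => ?_
  rw [show Finsupp.single b (g b) = g b • Finsupp.single b (1 : A) from by
    rw [Finsupp.smul_single', mul_one], map_smul]

lemma d_apply_eq (i : ℕ) (g : res.β (i+1) →₀ A) (c : res.β i) :
    res.d i g c = ∑ b ∈ g.support, g b * res.d i (Finsupp.single b 1) c := by
  rw [d_eq_sum, Finsupp.sum, Finset.sum_apply']
  refine Finset.sum_congr rfl fun b _ => ?_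
  rw [Finsupp.smul_apply, smul_eq_mul]

lemma d_mem_mF (i : ℕ) (g : res.β (i+1) →₀ A) : res.d i g ∈ res.mF 1 i := by
  rw [mem_mF_iff]
  intro c
  rw [d_apply_eq, pow_one]
  exact Submodule.sum_mem _ fun b _ => Ideal.mul_mem_left _ _ (res.minimal i b c)

lemma mk_mem_range_dq (i : ℕ) (g : res.β i →₀ A) :
    (Submodule.Quotient.mk g : res.Cq 1 i) ∈ LinearMap.range (res.dq 1 i) ↔
      g ∈ res.mF 1 i := by
  constructor
  · rintro ⟨y, hy⟩
    obtain ⟨h, rfl⟩ := Submodule.Quotient.mk_surjective _ y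
    rw [MinFreeRes.dq, Submodule.mapQ_apply, Submodule.Quotient.eq] at hy
    have h2 := d_mem_mF res i h
    have h3 := add_mem (neg_mem hy) h2
    simpa using h3
  · intro hg
    refine ⟨0, ?_⟩
    rw [map_zero, eq_comm, Submodule.Quotient.mk_eq_zero]
    exact hg

lemma nu0_iff : res.nu0 = 0 ↔ ∀ g : res.β 0 →₀ A, g ∈ res.mF 1 0 := by
  constructor
  · intro h g
    have h0 : res.nu0 (Submodule.Quotient.mk (Submodule.Quotient.mk g)) = 0 := by
      rw [h]; rfl
    rw [MinFreeRes.nu0, Submodule.mapQ_apply, Submodule.Quotient.mk_eq_zero,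
      MinFreeRes.qq, Submodule.mapQ_apply, LinearMap.id_apply] at h0
    exact (mk_mem_range_dq res 0 g).mp h0
  · intro h
    apply LinearMap.ext
    intro x
    obtain ⟨y, rfl⟩ := Submodule.Quotient.mk_surjective _ x
    obtain ⟨g, rfl⟩ := Submodule.Quotient.mk_surjective _ y
    rw [MinFreeRes.nu0, Submodule.mapQ_apply, LinearMap.zero_apply,
      Submodule.Quotient.mk_eq_zero, MinFreeRes.qq, Submodule.mapQ_apply, LinearMap.id_apply]
    exact (mk_mem_range_dq res 0 g).mpr (h g)

lemma qqZ_coe_mk (l : ℕ) (g : res.β (l+1) →₀ A)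
    (hz : (Submodule.Quotient.mk g : res.Cq 2 (l+1)) ∈ res.Zc 2 l) :
    ((res.qqZ l ⟨Submodule.Quotient.mk g, hz⟩ : ↥(res.Zc 1 l)) : res.Cq 1 (l+1)) =
      Submodule.Quotient.mk g := by
  rw [MinFreeRes.qqZ, LinearMap.restrict_coe_apply, MinFreeRes.qq, Submodule.mapQ_apply,
    LinearMap.id_apply]

lemma mk_mem_Zc (l : ℕ) (g : res.β (l+1) →₀ A) :
    (Submodule.Quotient.mk g : res.Cq 2 (l+1)) ∈ res.Zc 2 l ↔
      res.d l g ∈ res.mF 2 l := by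
  rw [MinFreeRes.Zc, LinearMap.mem_ker, MinFreeRes.dq, Submodule.mapQ_apply,
    Submodule.Quotient.mk_eq_zero]

lemma mem_Bc_iff (l : ℕ) (z : ↥(res.Zc 1 l)) :
    z ∈ res.Bc 1 l ↔ (z : res.Cq 1 (l+1)) ∈ LinearMap.range (res.dq 1 (l+1)) := by
  rw [MinFreeRes.Bc, Submodule.mem_comap, Submodule.subtype_apply]

lemma nuS_iff (l : ℕ) : res.nuS l = 0 ↔
    ∀ g : res.β (l+1) →₀ A, res.d l g ∈ res.mF 2 l → g ∈ res.mF 1 (l+1) := by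
  constructor
  · intro h g hg
    have hz : (Submodule.Quotient.mk g : res.Cq 2 (l+1)) ∈ res.Zc 2 l :=
      (mk_mem_Zc res l g).mpr hg
    have h0 : res.nuS l (Submodule.Quotient.mk (⟨_, hz⟩ : ↥(res.Zc 2 l))) = 0 := by
      rw [h]; rfl
    rw [MinFreeRes.nuS, Submodule.mapQ_apply, Submodule.Quotient.mk_eq_zero,
      mem_Bc_iff, qqZ_coe_mk] at h0
    exact (mk_mem_range_dq res (l+1) g).mp h0
  · intro h
    apply LinearMap.ext
    intro x
    obtain ⟨z, rfl⟩ := Submodule.Quotient.mk_surjective _ x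
    rw [MinFreeRes.nuS, Submodule.mapQ_apply, LinearMap.zero_apply,
      Submodule.Quotient.mk_eq_zero]
    obtain ⟨zz, hzz⟩ := z
    obtain ⟨g, rfl⟩ := Submodule.Quotient.mk_surjective _ zz
    have hg : res.d l g ∈ res.mF 2 l := (mk_mem_Zc res l g).mp hzz
    rw [mem_Bc_iff, qqZ_coe_mk]
    exact (mk_mem_range_dq res (l+1) g).mpr (h g hg)

end Aux


section GradedAux

variable {k : Type} [Field k] {n : ℕ}

/-- total weight of an exponent vector -/
def wt (d : Fin n →₀ ℕ) : ℕ := ∑ u, d u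

lemma wt_add (d e : Fin n →₀ ℕ) : wt (d + e) = wt d + wt e := by
  unfold wt
  rw [← Finset.sum_add_distrib]
  exact Finset.sum_congr rfl fun u _ => Finsupp.add_apply d e u

lemma wt_single (u : Fin n) : wt (Finsupp.single u 1) = 1 := by
  unfold wt
  rw [Finset.sum_eq_single u (fun v _ hv => Finsupp.single_eq_of_ne' (Ne.symm hv))
    (fun hu => absurd (Finset.mem_univ u) hu)]
  exact Finsupp.single_eq_same

lemma pow_mIdl (ℓ : ℕ) :
    mIdl k n ^ ℓ = Ideal.span ((fun d => monomial d (1:k)) '' {d | ℓ ≤ wt d}) := by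
  induction ℓ with
  | zero =>
    rw [pow_zero, Ideal.one_eq_top, eq_comm, Ideal.eq_top_iff_one]
    refine Ideal.subset_span ⟨0, by simp [wt], ?_⟩
    show monomial (0 : Fin n →₀ ℕ) (1:k) = 1
    rw [monomial_zero', C_1]
  | succ ℓ ih =>
    apply le_antisymm
    · rw [pow_succ, ih, mIdl, Ideal.span_mul_span, Ideal.span_le]
      intro x hx
      rw [Set.mem_mul] at hx
      obtain ⟨y, ⟨d, hd, rfl⟩, z, ⟨u, rfl⟩, rfl⟩ := hx
      refine Ideal.subset_span ⟨d + Finsupp.single u 1, ?_, ?_⟩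
      · show ℓ + 1 ≤ wt (d + Finsupp.single u 1)
        rw [wt_add, wt_single]
        exact Nat.add_le_add hd le_rfl
      · show monomial (d + Finsupp.single u 1) (1:k) = monomial d 1 * X u
        rw [show (X u : PolyS k n) = monomial (Finsupp.single u 1) 1 from rfl,
          monomial_mul, one_mul]
    · rw [Ideal.span_le]
      rintro x ⟨d, hd, rfl⟩
      show monomial d (1:k) ∈ (mIdl k n ^ (ℓ+1) : Ideal (PolyS k n))
      have hd' : ℓ + 1 ≤ wt d := hd
      have hu : ∃ u, d u ≠ 0 := by
        by_contra hc
        push_neg at hc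
        have : wt d = 0 := Finset.sum_eq_zero fun u _ => hc u
        omega
      obtain ⟨u, hu⟩ := hu
      have hle : Finsupp.single u 1 ≤ d := Finsupp.single_le_iff.2 (Nat.one_le_iff_ne_zero.2 hu)
      set e := d - Finsupp.single u 1 with he
      have hde : e + Finsupp.single u 1 = d := tsub_add_cancel_of_le hle
      have hwt : ℓ ≤ wt e := by
        have := wt_add e (Finsupp.single u 1)
        rw [hde, wt_single] at this
        omega
      have hxe : monomial d (1:k) = X u * monomial e 1 := by
        rw [show (X u : PolyS k n) = monomial (Finsupp.single u 1) 1 from rfl,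
          monomial_mul, one_mul, add_comm, hde]
      rw [hxe, pow_succ']
      exact Ideal.mul_mem_mul (Ideal.subset_span ⟨u, rfl⟩)
        (ih ▸ Ideal.subset_span ⟨e, hwt, rfl⟩)

lemma mem_pow_mIdl_iff {p : PolyS k n} {ℓ : ℕ} :
    p ∈ mIdl k n ^ ℓ ↔ ∀ d ∈ p.support, ℓ ≤ wt d := by
  rw [pow_mIdl, mem_ideal_span_monomial_image]
  constructor
  · intro h d hd
    obtain ⟨e, he, hle⟩ := h d hd
    exact le_trans he (Finset.sum_le_sum fun u _ => (Finsupp.le_def.mp hle) u)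
  · intro h d hd
    exact ⟨d, h d hd, le_rfl⟩

lemma hc_mem_pow {q : PolyS k n} (ℓ j : ℕ) (hq : q ∈ mIdl k n ^ ℓ) :
    homogeneousComponent j q ∈ mIdl k n ^ ℓ := by
  rw [mem_pow_mIdl_iff] at hq ⊢
  intro d hd
  apply hq
  rw [MvPolynomial.mem_support_iff, coeff_homogeneousComponent] at hd
  rw [MvPolynomial.mem_support_iff]
  split_ifs at hd with h
  · exact hd
  · exact absurd rfl hd

/-- homogeneous component with ℤ-indexing -/
def hcz (t : ℤ) (p : PolyS k n) : PolyS k n :=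
  if 0 ≤ t then homogeneousComponent t.toNat p else 0

lemma polyHom_zero (t : ℤ) : polyHom k n t 0 := by
  unfold polyHom
  split_ifs with h
  · exact isHomogeneous_zero _ _ _
  · rfl

lemma polyHom_hcz (t : ℤ) (p : PolyS k n) : polyHom k n t (hcz t p) := by
  unfold polyHom hcz
  split_ifs with h
  · exact homogeneousComponent_isHomogeneous t.toNat p
  · rfl

lemma sum_hcz (T : Finset ℤ) (kk : ℤ) (p : PolyS k n)
    (hT : ∀ j ∈ Finset.range (p.totalDegree + 1), (j : ℤ) + kk ∈ T) :
    ∑ s ∈ T, hcz (s - kk) p = p := by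
  classical
  set T₀ := (Finset.range (p.totalDegree + 1)).image (fun j : ℕ => (j : ℤ) + kk) with hT₀
  have hsub : T₀ ⊆ T := by
    intro s hs
    rw [hT₀, Finset.mem_image] at hs
    obtain ⟨j, hj, rfl⟩ := hs
    exact hT j hj
  rw [← Finset.sum_subset hsub ?_]
  · rw [hT₀, Finset.sum_image (fun a _ b _ h => by omega)]
    have heach : ∀ j ∈ Finset.range (p.totalDegree + 1),
        hcz ((j:ℤ) + kk - kk) p = homogeneousComponent j p := by
      intro j _
      unfold hcz
      rw [show (j:ℤ) + kk - kk = (j:ℤ) by ring, if_pos (Int.natCast_nonneg j),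
        Int.toNat_natCast]
    rw [Finset.sum_congr rfl heach, sum_homogeneousComponent]
  · intro s hs hns
    unfold hcz
    split_ifs with hpos
    · apply homogeneousComponent_eq_zero
      by_contra hle
      push_neg at hle
      apply hns
      rw [hT₀, Finset.mem_image]
      exact ⟨(s - kk).toNat, Finset.mem_range.2 (Nat.lt_succ_of_le hle),
        by rw [Int.toNat_of_nonneg hpos]; ring⟩
    · rfl

end GradedAux


section QuotAux

variable {k : Type} [Field k] {n : ℕ} (J : Ideal (PolyS k n))

lemma quotHom_zero (t : ℤ) : quotHom k n J t 0 :=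
  ⟨0, polyHom_zero t, map_zero _⟩

lemma polyHom_add {t : ℤ} {p q : PolyS k n} (hp : polyHom k n t p) (hq : polyHom k n t q) :
    polyHom k n t (p + q) := by
  unfold polyHom at *
  split_ifs at * with h
  · exact hp.add hq
  · rw [hp, hq, add_zero]

lemma polyHom_mul {t t' : ℤ} {p q : PolyS k n} (hp : polyHom k n t p) (hq : polyHom k n t' q) :
    polyHom k n (t + t') (p * q) := by
  unfold polyHom at *
  by_cases ht : 0 ≤ t
  · by_cases ht' : 0 ≤ t'
    · rw [if_pos ht] at hp
      rw [if_pos ht'] at hq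
      rw [if_pos (add_nonneg ht ht'), show (t + t').toNat = t.toNat + t'.toNat by omega]
      exact hp.mul hq
    · rw [if_neg ht'] at hq
      rw [hq, mul_zero]
      exact polyHom_zero _
  · rw [if_neg ht] at hp
    rw [hp, zero_mul]
    exact polyHom_zero _

lemma quotHom_add {t : ℤ} {a b : PolyS k n ⧸ J} (ha : quotHom k n J t a)
    (hb : quotHom k n J t b) : quotHom k n J t (a + b) := by
  obtain ⟨p, hp, rfl⟩ := ha
  obtain ⟨q, hq, rfl⟩ := hb
  exact ⟨p + q, polyHom_add hp hq, map_add _ _ _⟩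

lemma quotHom_mul {t t' : ℤ} {a b : PolyS k n ⧸ J} (ha : quotHom k n J t a)
    (hb : quotHom k n J t' b) : quotHom k n J (t + t') (a * b) := by
  obtain ⟨p, hp, rfl⟩ := ha
  obtain ⟨q, hq, rfl⟩ := hb
  exact ⟨p * q, polyHom_mul hp hq, map_mul _ _ _⟩

lemma quotHom_sum {ι : Type} (T : Finset ι) (t : ℤ) (f : ι → PolyS k n ⧸ J)
    (hf : ∀ s ∈ T, quotHom k n J t (f s)) : quotHom k n J t (∑ s ∈ T, f s) :=
  Finset.sum_induction f _ (fun _ _ => quotHom_add J) (quotHom_zero J t) hf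

lemma sum_mem_pow_of_hom {ι : Type} (hJ : IdealIsHomog J) (T : Finset ι) (dg : ι → ℤ)
    (hinj : Set.InjOn dg T) (a : ι → PolyS k n ⧸ J)
    (ha : ∀ s ∈ T, quotHom k n J (dg s) (a s)) (ℓ : ℕ)
    (h : ∑ s ∈ T, a s ∈ mIdlQ k n J ^ ℓ) : ∀ s ∈ T, a s ∈ mIdlQ k n J ^ ℓ := by
  classical
  choose p hp hmk using ha
  have hQ : mIdlQ k n J ^ ℓ = Ideal.map (Ideal.Quotient.mk J) (mIdl k n ^ ℓ) := by
    rw [mIdlQ, Ideal.map_pow]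
  rw [hQ, Ideal.mem_map_iff_of_surjective _ Ideal.Quotient.mk_surjective] at h
  obtain ⟨q, hq, hqe⟩ := h
  intro s₀ hs₀
  by_cases hneg : 0 ≤ dg s₀
  · -- the interesting case
    have hsum : (∑ s ∈ T.attach, p s s.2) - q ∈ J := by
      rw [← Ideal.Quotient.mk_eq_mk_iff_sub_mem, map_sum]
      rw [Finset.sum_congr rfl fun s _ => hmk s.1 s.2]
      rw [Finset.sum_attach T a, hqe]
    have hcJ := hJ _ hsum (dg s₀).toNat
    rw [map_sub] at hcJ
    have hcsum : homogeneousComponent (dg s₀).toNat (∑ s ∈ T.attach, p s s.2)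
        = p s₀ hs₀ := by
      rw [map_sum, Finset.sum_eq_single (⟨s₀, hs₀⟩ : {x // x ∈ T})]
      · have hh := hp s₀ hs₀
        unfold polyHom at hh
        rw [if_pos hneg] at hh
        rw [homogeneousComponent_of_mem ((mem_homogeneousSubmodule _ _).2 hh), if_pos rfl]
      · intro b _ hb
        have hbs : (b : ι) ≠ s₀ := fun he => hb (Subtype.ext he)
        have hdg : dg (b : ι) ≠ dg s₀ := fun he => hbs (hinj b.2 hs₀ he)
        have hh := hp (b : ι) b.2
        unfold polyHom at hh
        split_ifs at hh with hb0
        · have hne : (dg s₀).toNat ≠ (dg (b : ι)).toNat := fun he => hdg (by omega)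
          rw [homogeneousComponent_of_mem ((mem_homogeneousSubmodule _ _).2 hh),
            if_neg hne]
        · rw [hh, map_zero]
      · intro hmem
        exact absurd (Finset.mem_attach _ _) hmem
    rw [hcsum] at hcJ
    have hq2 : homogeneousComponent (dg s₀).toNat q ∈ mIdl k n ^ ℓ :=
      hc_mem_pow ℓ _ hq
    rw [← hmk s₀ hs₀, hQ, Ideal.mem_map_iff_of_surjective _ Ideal.Quotient.mk_surjective]
    refine ⟨homogeneousComponent (dg s₀).toNat q, hq2, ?_⟩
    rw [Ideal.Quotient.mk_eq_mk_iff_sub_mem]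
    simpa using neg_mem hcJ
  · have hh := hp s₀ hs₀
    unfold polyHom at hh
    rw [if_neg hneg] at hh
    rw [← hmk s₀ hs₀, hh, map_zero]
    exact zero_mem _

end QuotAux


section DecompAux

variable {k : Type} [Field k] {n : ℕ} (J : Ideal (PolyS k n))
  {M : Type} [AddCommGroup M] [Module (PolyS k n ⧸ J) M]
  {gM : GrModStr (quotHom k n J) M}
  (res : MinFreeRes (mIdlQ k n J) (quotHom k n J) M gM)

lemma exists_decomp (i : ℕ) (g : res.β i →₀ (PolyS k n ⧸ J)) :
    ∃ (T : Finset ℤ) (comp : ℤ → (res.β i →₀ (PolyS k n ⧸ J))),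
      (∀ s, res.IsHomogF i s (comp s)) ∧ ∑ s ∈ T, comp s = g := by
  classical
  letI := res.finb i
  choose P hP using fun c => Ideal.Quotient.mk_surjective (I := J) (g c)
  refine ⟨Finset.univ.biUnion (fun c => (Finset.range ((P c).totalDegree + 1)).image
      (fun j : ℕ => (j : ℤ) + res.degB i c)),
    fun s => Finsupp.equivFunOnFinite.symm
      (fun c => Ideal.Quotient.mk J (hcz (s - res.degB i c) (P c))),
    fun s c => ?_, ?_⟩
  · exact ⟨hcz (s - res.degB i c) (P c), polyHom_hcz _ _, rfl⟩
  · ext c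
    rw [Finset.sum_apply']
    have heq : ∀ s : ℤ, (Finsupp.equivFunOnFinite.symm
        (fun c => Ideal.Quotient.mk J (hcz (s - res.degB i c) (P c)))) c
        = Ideal.Quotient.mk J (hcz (s - res.degB i c) (P c)) := fun s => rfl
    rw [Finset.sum_congr rfl fun s _ => heq s, ← map_sum, sum_hcz _ _ _ ?_, hP c]
    intro j hj
    exact Finset.mem_biUnion.2 ⟨c, Finset.mem_univ c, Finset.mem_image_of_mem _ hj⟩

lemma isHomogF_d (i : ℕ) (t : ℤ) (g : res.β (i+1) →₀ (PolyS k n ⧸ J))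
    (hg : res.IsHomogF (i+1) t g) : res.IsHomogF i t (res.d i g) := by
  intro c
  rw [d_apply_eq]
  refine quotHom_sum J _ _ _ fun b _ => ?_
  have h1 := quotHom_mul J (hg b) (res.homog i b c)
  rwa [show t - res.degB (i+1) b + (res.degB (i+1) b - res.degB i c) = t - res.degB i c
    by ring] at h1

end DecompAux

/-- (Şega's lemma.)  `ν_i^1(M) = 0` if and only if every homogeneous
`g ∈ F_i` with `d g ∈ m² F_{i-1}` satisfies `g ∈ m F_i`.  (For `i = 0` one has `F_{-1} = 0`,
so the condition `d g ∈ m² F_{-1}` is vacuous.) -/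
theorem nu_eq_zero_iff {k : Type} [Field k] {n : ℕ}
    (J : Ideal (PolyS k n)) (hJ : IdealIsHomog J)
    {M : Type} [AddCommGroup M] [Module (PolyS k n ⧸ J) M]
    (gM : GrModStr (quotHom k n J) M)
    (res : MinFreeRes (mIdlQ k n J) (quotHom k n J) M gM) :
    (res.nu0 = 0 ↔
      ∀ (t : ℤ) (g : res.β 0 →₀ (PolyS k n ⧸ J)),
        res.IsHomogF 0 t g → g ∈ res.mF 1 0) ∧
    (∀ i : ℕ, res.nuS i = 0 ↔
      ∀ (t : ℤ) (g : res.β (i+1) →₀ (PolyS k n ⧸ J)),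
        res.IsHomogF (i+1) t g → res.d i g ∈ res.mF 2 i → g ∈ res.mF 1 (i+1)) := by
  constructor
  · rw [nu0_iff res]
    constructor
    · intro h t g _
      exact h g
    · intro h g
      obtain ⟨T, comp, hhom, hsum⟩ := exists_decomp J res 0 g
      rw [← hsum]
      exact Submodule.sum_mem _ fun s _ => h s (comp s) (hhom s)
  · intro i
    rw [nuS_iff res i]
    constructor
    · intro h t g _ hd
      exact h g hd
    · intro h g hd
      obtain ⟨T, comp, hhom, hsum⟩ := exists_decomp J res (i+1) g
      rw [← hsum]
      refine Submodule.sum_mem _ fun s hs => ?_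
      refine h s (comp s) (hhom s) ?_
      rw [mem_mF_iff]
      intro c
      have hdg : ∀ c', res.d i g c' ∈ mIdlQ k n J ^ 2 := (mem_mF_iff res 2 i _).mp hd
      have hsplit : ∑ s' ∈ T, res.d i (comp s') c = res.d i g c := by
        rw [← hsum, map_sum, Finset.sum_apply']
      refine sum_mem_pow_of_hom J hJ T (fun s' => s' - res.degB i c)
        (fun a _ b _ hab => by simpa using hab) (fun s' => res.d i (comp s') c)
        (fun s' _ => isHomogF_d J res i s' (comp s') (hhom s') c) 2 ?_ s hs
      rw [hsplit]
      exact hdg c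
end LinMaps
end
end

section
/- Let I ⊆ S be a homogeneous ideal, let F be a minimal free resolution of S/I equipped with a multiplicative structure (a homogeneous chain map F ⊗_S F → F lifting the identity of S/I, inducing the product on Tor^S_*(S/I, 𝕜)). Let a, b ∈ Tor^S_*(S/I, 𝕜) be homogeneous elements of homological degrees i₁ and i₂ respectively, such that a·b ≠ 0 and every product of two homogeneous elements of Tor^S_*(S/I, 𝕜) of total homological degree strictly less than i₁ + i₂ is zero. Then a·b lies in the image of ν^1_{i₁+i₂}(S/I) : Tor_{i₁+i₂}^S(S/I, S/m²) → Tor_{i₁+i₂}^S(S/I, S/m). -/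
set_option maxHeartbeats 1000000
set_option synthInstance.maxHeartbeats 400000

open MvPolynomial

noncomputable section

namespace LinMaps


/-- A multiplicative structure on a resolution `F` of `A/I`: a homogeneous collection of
`A`-bilinear maps `F_i × F_j → F_{i+j}` lifting the multiplication of `A/I` and satisfying
the Leibniz rule (i.e. a chain map `F ⊗ F → F` lifting the identity). -/
structure MultStr {A : Type} [CommRing A] {mA : Ideal A} {γ : Type} [AddCommGroup γ]
    [DecidableEq γ] {hom : γ → A → Prop} {I : Ideal A} {gQ : GrModStr hom (A ⧸ I)}
    (res : MinFreeRes mA hom (A ⧸ I) gQ) where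
  mul : ∀ (i j l : ℕ), i + j = l →
    (res.β i →₀ A) →ₗ[A] ((res.β j →₀ A) →ₗ[A] (res.β l →₀ A))
  lift_mul : ∀ (a b : res.β 0 →₀ A),
    res.aug (mul 0 0 0 rfl a b) = res.aug a * res.aug b
  hom_mul : ∀ (i j l : ℕ) (h : i + j = l) (t s : γ) (a : res.β i →₀ A) (b : res.β j →₀ A),
    res.IsHomogF i t a → res.IsHomogF j s b → res.IsHomogF l (t + s) (mul i j l h a b)
  leibniz_left : ∀ (i : ℕ) (a : res.β (i+1) →₀ A) (b : res.β 0 →₀ A),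
    res.d i (mul (i+1) 0 (i+1) rfl a b) = mul i 0 i rfl (res.d i a) b
  leibniz_right : ∀ (j : ℕ) (a : res.β 0 →₀ A) (b : res.β (j+1) →₀ A),
    res.d j (mul 0 (j+1) (j+1) (by omega) a b) = mul 0 j j (by omega) a (res.d j b)
  leibniz : ∀ (i j : ℕ) (a : res.β (i+1) →₀ A) (b : res.β (j+1) →₀ A),
    res.d (i+j+1) (mul (i+1) (j+1) (i+j+2) (by omega) a b) =
      mul i (j+1) (i+j+1) (by omega) (res.d i a) b +
      ((-1 : ℤ) ^ (i+1)) • mul (i+1) j (i+j+1) (by omega) a (res.d j b)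

/-- The class in `Tor_l(M, A/m)` of a chain `x ∈ F_l` lies in the image of
`ν_l^1(M) : Tor_l(M, A/m²) → Tor_l(M, A/m)`. -/
def MinFreeRes.classInNuRange {A : Type} [CommRing A] {mA : Ideal A} {γ : Type}
    [AddCommGroup γ] [DecidableEq γ] {hom : γ → A → Prop} {M : Type} [AddCommGroup M]
    [Module A M] {gM : GrModStr hom M} (res : MinFreeRes mA hom M gM) :
    ∀ (l : ℕ), (res.β l →₀ A) → Prop
  | 0, x => ∃ y : res.Tor0 2,
      res.nu0 y = Submodule.Quotient.mk ((Submodule.Quotient.mk x : res.Cq 1 0))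
  | l+1, x => ∃ (hz : (Submodule.Quotient.mk x : res.Cq 1 (l+1)) ∈ res.Zc 1 l)
      (y : res.TorS 2 l),
      res.nuS l y = Submodule.Quotient.mk (⟨Submodule.Quotient.mk x, hz⟩ : ↥(res.Zc 1 l))


section Aux

variable {A : Type} [CommRing A] {mA : Ideal A} {γ : Type} [AddCommGroup γ] [DecidableEq γ]
  {hom : γ → A → Prop} {M : Type} [AddCommGroup M] [Module A M] {gM : GrModStr hom M}
  (res : MinFreeRes mA hom M gM)

namespace MinFreeRes

/-- A standard basis vector is homogeneous of the degree of its basis element. -/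
lemma single_isHomogF_aux (hone : hom 0 1) (hzero : ∀ t, hom t 0) (i : ℕ) (c : res.β i) :
    res.IsHomogF i (res.degB i c) (Finsupp.single c 1) := by
  intro c'
  by_cases h : c = c'
  · subst h
    rw [Finsupp.single_eq_same, sub_self]
    exact hone
  · rw [Finsupp.single_eq_of_ne' h]
    exact hzero _

/-- All entries of `d x` lie in the maximal ideal. -/
lemma d_apply_mem (i : ℕ) (x : res.β (i+1) →₀ A) (c : res.β i) :
    res.d i x c ∈ mA := by
  induction x using Finsupp.induction_linear with
  | zero => simp
  | add f g hf hg => rw [map_add, Finsupp.add_apply]; exact add_mem hf hg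
  | single b r =>
    have h1 : (Finsupp.single b r : res.β (i+1) →₀ A) = r • Finsupp.single b 1 := by
      rw [Finsupp.smul_single, smul_eq_mul, mul_one]
    rw [h1, map_smul, Finsupp.smul_apply, smul_eq_mul]
    exact Ideal.mul_mem_left _ _ (res.minimal i b c)

lemma mF_two_eq (l : ℕ) : res.mF 2 l = mA • res.mF 1 l := by
  show (mA ^ 2) • _ = mA • ((mA ^ 1) • _)
  rw [pow_one, pow_two, ← Ideal.smul_eq_mul, Submodule.smul_assoc]

/-- If all coordinates of `x` lie in `m` and `f` maps basis vectors into `m·F`,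
then `f x ∈ m²·F`. -/
lemma apply_mem_mF2 {i l : ℕ} (f : (res.β i →₀ A) →ₗ[A] (res.β l →₀ A))
    (x : res.β i →₀ A) (hx : ∀ c, x c ∈ mA)
    (hf : ∀ c, f (Finsupp.single c 1) ∈ res.mF 1 l) :
    f x ∈ res.mF 2 l := by
  have hrep : x = x.sum fun c r => r • Finsupp.single c 1 := by
    conv_lhs => rw [← Finsupp.sum_single x]
    refine Finsupp.sum_congr fun c _ => ?_
    rw [Finsupp.smul_single, smul_eq_mul, mul_one]
  rw [hrep, map_finsuppSum]
  refine Submodule.sum_mem _ fun c _ => ?_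
  show f (x c • Finsupp.single c 1) ∈ res.mF 2 l
  rw [map_smul, res.mF_two_eq]
  exact Submodule.smul_mem_smul (hx c) (hf c)

/-- If `d z ∈ m²·F` then the class of `z` lies in the image of `ν¹`. -/
lemma classInNuRange_of (l : ℕ) (z : res.β (l+1) →₀ A)
    (hdz : res.d l z ∈ res.mF 2 l) : res.classInNuRange (l+1) z := by
  have hdz1 : res.d l z ∈ res.mF 1 l :=
    Submodule.smul_mono_left (Ideal.pow_le_pow_right one_le_two) hdz
  have hz1 : (Submodule.Quotient.mk z : res.Cq 1 (l+1)) ∈ res.Zc 1 l := by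
    show res.dq 1 l (Submodule.Quotient.mk z) = 0
    rw [dq, Submodule.mapQ_apply, Submodule.Quotient.mk_eq_zero]
    exact hdz1
  have hz2 : (Submodule.Quotient.mk z : res.Cq 2 (l+1)) ∈ res.Zc 2 l := by
    show res.dq 2 l (Submodule.Quotient.mk z) = 0
    rw [dq, Submodule.mapQ_apply, Submodule.Quotient.mk_eq_zero]
    exact hdz
  refine ⟨hz1, Submodule.Quotient.mk (⟨Submodule.Quotient.mk z, hz2⟩ : ↥(res.Zc 2 l)), ?_⟩
  rw [nuS, Submodule.mapQ_apply]
  congr 1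

end MinFreeRes

end Aux

/-- Let `I ⊆ S` be a homogeneous ideal and `F` a minimal free resolution
of `S/I` with a multiplicative structure.  If `a, b` are homogeneous elements of
`Tor^S(S/I, 𝕜)` of homological degrees `i₁, i₂` with `a·b ≠ 0` and all products of total
homological degree `< i₁ + i₂` vanish, then `a·b` lies in the image of `ν¹_{i₁+i₂}(S/I)`. -/
theorem product_in_nu_image {k : Type} [Field k] {n : ℕ}
    (I : Ideal (PolyS k n)) (hI : IdealIsHomog I)
    (gQ : GrModStr (polyHom k n) (PolyS k n ⧸ I))
    (hgQ : ∀ (t : ℤ) (x : PolyS k n ⧸ I), x ∈ gQ.gr t ↔ quotHom k n I t x)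
    (res : MinFreeRes (mIdl k n) (polyHom k n) (PolyS k n ⧸ I) gQ)
    (ms : MultStr res) (i₁ i₂ : ℕ) (t₁ t₂ : ℤ)
    (a : res.β i₁ →₀ PolyS k n) (b : res.β i₂ →₀ PolyS k n)
    (hta : res.IsHomogF i₁ t₁ a) (htb : res.IsHomogF i₂ t₂ b)
    (hab : ms.mul i₁ i₂ (i₁+i₂) rfl a b ∉ res.mF 1 (i₁+i₂))
    (hmin : ∀ (j₁ j₂ : ℕ), j₁ + j₂ < i₁ + i₂ →
      ∀ (s₁ s₂ : ℤ) (x : res.β j₁ →₀ PolyS k n) (y : res.β j₂ →₀ PolyS k n),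
        res.IsHomogF j₁ s₁ x → res.IsHomogF j₂ s₂ y →
          ms.mul j₁ j₂ (j₁+j₂) rfl x y ∈ res.mF 1 (j₁+j₂)) :
    res.classInNuRange (i₁+i₂) (ms.mul i₁ i₂ (i₁+i₂) rfl a b) := by
  classical
  have hone : polyHom k n 0 (1 : PolyS k n) := by
    simp only [polyHom, le_refl, if_true, Int.toNat_zero]
    exact MvPolynomial.isHomogeneous_one _ _
  have hzero : ∀ t : ℤ, polyHom k n t (0 : PolyS k n) := by
    intro t
    unfold polyHom
    split_ifs
    · exact MvPolynomial.isHomogeneous_zero _ _ _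
    · rfl
  have hmin' : ∀ (j₁ j₂ m : ℕ) (hm : j₁ + j₂ = m), m < i₁ + i₂ →
      ∀ (s₁ s₂ : ℤ) (x : res.β j₁ →₀ PolyS k n) (y : res.β j₂ →₀ PolyS k n),
        res.IsHomogF j₁ s₁ x → res.IsHomogF j₂ s₂ y →
          ms.mul j₁ j₂ m hm x y ∈ res.mF 1 m := by
    intro j₁ j₂ m hm hlt s₁ s₂ x y hx hy
    subst hm
    exact hmin j₁ j₂ hlt s₁ s₂ x y hx hy
  have key : ∀ (m : ℕ) (h : i₁ + i₂ = m),
      res.classInNuRange m (ms.mul i₁ i₂ m h a b) := by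
    intro m h
    rcases i₁ with _ | i <;> rcases i₂ with _ | j
    · -- i₁ = 0, i₂ = 0
      obtain rfl : m = 0 := by omega
      refine ⟨Submodule.Quotient.mk (Submodule.Quotient.mk (ms.mul 0 0 0 h a b)), ?_⟩
      rw [MinFreeRes.nu0, Submodule.mapQ_apply]
      congr 1
    · -- i₁ = 0, i₂ = j+1
      obtain rfl : m = j + 1 := by omega
      refine res.classInNuRange_of j _ ?_
      rw [ms.leibniz_right j a b]
      refine res.apply_mem_mF2 (ms.mul 0 j j (by omega) a) _ (res.d_apply_mem j b)
        (fun c => ?_)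
      exact hmin' 0 j j (by omega) (by omega) t₁ (res.degB j c) a _ hta
        (res.single_isHomogF_aux hone hzero j c)
    · -- i₁ = i+1, i₂ = 0
      obtain rfl : m = i + 1 := by omega
      refine res.classInNuRange_of i _ ?_
      rw [ms.leibniz_left i a b]
      refine res.apply_mem_mF2 ((ms.mul i 0 i rfl).flip b) _ (res.d_apply_mem i a)
        (fun c => ?_)
      exact hmin' i 0 i (by omega) (by omega) (res.degB i c) t₂ _ b
        (res.single_isHomogF_aux hone hzero i c) htb
    · -- i₁ = i+1, i₂ = j+1
      obtain rfl : m = i + j + 2 := by omega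
      refine res.classInNuRange_of (i+j+1) _ ?_
      rw [ms.leibniz i j a b]
      refine add_mem ?_ (Submodule.smul_of_tower_mem _ _ ?_)
      · refine res.apply_mem_mF2 ((ms.mul i (j+1) (i+j+1) (by omega)).flip b) _
          (res.d_apply_mem i a) (fun c => ?_)
        exact hmin' i (j+1) (i+j+1) (by omega) (by omega) (res.degB i c) t₂ _ b
          (res.single_isHomogF_aux hone hzero i c) htb
      · refine res.apply_mem_mF2 (ms.mul (i+1) j (i+j+1) (by omega) a) _
          (res.d_apply_mem j b) (fun c => ?_)
        exact hmin' (i+1) j (i+j+1) (by omega) (by omega) t₁ (res.degB j c) a _ hta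
          (res.single_isHomogF_aux hone hzero j c)
  exact key (i₁ + i₂) rfl
end LinMaps
end
end
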